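/- If f_j ⇉ f uniformly on T, then for every ε > 0: limsup_{j→∞} V_ε(f_j,T) ≤ V_{ε'}(f,T) for every 0 < ε' < ε. -/
import Mathlib


open Filter Set
open scoped ENNReal Topology

/-- The approximate (ε-)variation: infimum of Jordan variations of functions of
bounded variation uniformly ε-close to `f` on `T` (⊤ if no such function). -/
noncomputable def approxVar {M : Type*} [MetricSpace M] (f : ℝ → M) (T : Set ℝ) (ε : ℝ) : ℝ≥0∞ :=
  ⨅ (g : ℝ → M) (_ : eVariationOn g T ≠ ⊤ ∧ ∀ t ∈ T, dist (f t) (g t) ≤ ε),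
    eVariationOn g T

/-- The oscillation (diameter of the image) of `f` on `T`, valued in `[0,∞]`. -/
noncomputable def oscOn {M : Type*} [MetricSpace M] (f : ℝ → M) (T : Set ℝ) : ℝ≥0∞ :=
  ⨆ s ∈ T, ⨆ t ∈ T, edist (f s) (f t)

theorem limsup_approxVar_le {M : Type*} [MetricSpace M]
    (T : Set ℝ) (hT : T.Nonempty) (f : ℝ → M) (fj : ℕ → ℝ → M)
    (huc : TendstoUniformlyOn fj f atTop T)
    {ε ε' : ℝ} (hε' : 0 < ε') (hε'ε : ε' < ε) :
    Filter.limsup (fun j => approxVar (fj j) T ε) Filter.atTop ≤ approxVar f T ε' := by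
  have hev : ∀ᶠ j in atTop, ∀ t ∈ T, dist (f t) (fj j t) < ε - ε' :=
    (Metric.tendstoUniformlyOn_iff.mp huc) (ε - ε') (by linarith)
  refine Filter.limsup_le_of_le (by isBoundedDefault) ?_
  filter_upwards [hev] with j hj
  refine le_iInf₂ fun g hg => iInf₂_le g ⟨hg.1, fun t ht => ?_⟩
  calc dist (fj j t) (g t) ≤ dist (fj j t) (f t) + dist (f t) (g t) := dist_triangle _ _ _
    _ ≤ (ε - ε') + ε' := by
        gcongr
        · rw [dist_comm]; exact (hj t ht).le
        · exact hg.2 t ht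
    _ = ε := by ring
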